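/- Let (K, w) be a rank-1 valued field, R its valuation ring, 𝔪 its maximal ideal. Suppose f ∈ R[[X]] with w(f) = 0 (where w(Σ f_i X^i) = inf w(f_i)) and all coefficients f_i ∈ 𝔪. Then for every ε > 0 there exist an index i > 0 and a ∈ 𝔪 with w(a) < ε such that w(f_i) + i·w(a) < w(f₀); in particular, the substituted series g(X) = f(aX) ∈ R{X} satisfies w(g_i) < w(g₀) for some i > 0, hence g is not invertible in K{X}. -/

import Mathlib

open PowerSeries Filter Set

/-- An additive rank-1 (real-valued) non-archimedean valuation on a field `K`,
with values in `EReal` (real numbers on nonzero elements, `⊤` at `0`). -/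
structure AddRealValuation (K : Type*) [Field K] where
  w : K → EReal
  map_zero' : w 0 = ⊤
  finite' : ∀ x : K, x ≠ 0 → ∃ r : ℝ, w x = (r : EReal)
  map_one' : w 1 = 0
  map_mul' : ∀ x y : K, w (x * y) = w x + w y
  map_neg' : ∀ x : K, w (-x) = w x
  add_le' : ∀ x y : K, min (w x) (w y) ≤ w (x + y)

namespace AddRealValuation

variable {K : Type*} [Field K] (v : AddRealValuation K)

/-- The valuation is non-discrete: there exist elements of arbitrarily
small positive valuation. -/
def Nondiscrete : Prop := ∀ ε : ℝ, 0 < ε → ∃ x : K, 0 < v.w x ∧ v.w x < (ε : EReal)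

/-- `K` is complete with respect to `v`: every Cauchy sequence converges. -/
def IsComplete : Prop :=
  ∀ u : ℕ → K, (∀ M : ℝ, ∃ N : ℕ, ∀ m ≥ N, ∀ n ≥ N, (M : EReal) ≤ v.w (u m - u n)) →
    ∃ L : K, ∀ M : ℝ, ∃ N : ℕ, ∀ n ≥ N, (M : EReal) ≤ v.w (u n - L)

/-- The valuation ring `R = {x : K | w x ≥ 0}` of `v`. -/
def subring : Subring K where
  carrier := {x | 0 ≤ v.w x}
  zero_mem' := by show (0:EReal) ≤ v.w 0; rw [v.map_zero']; exact le_top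
  one_mem' := by show (0:EReal) ≤ v.w 1; rw [v.map_one']
  add_mem' := fun hx hy => le_trans (le_min hx hy) (v.add_le' _ _)
  mul_mem' := fun hx hy => by
    show (0:EReal) ≤ v.w _; rw [v.map_mul']; exact add_nonneg hx hy
  neg_mem' := fun {x} hx => by show (0:EReal) ≤ v.w (-x); rw [v.map_neg']; exact hx

/-- The extension of `v` to power series over `K`: the infimum of the
valuations of the coefficients. -/
noncomputable def wS (f : PowerSeries K) : EReal := ⨅ i : ℕ, v.w (PowerSeries.coeff i f)

/-- The extension of `v` to power series over the valuation ring `R` of `v`. -/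
noncomputable def wR (f : PowerSeries v.subring) : EReal :=
  ⨅ i : ℕ, v.w ((PowerSeries.coeff i f : v.subring) : K)

/-- `f` is a convergent power series (lies in the Tate algebra `K{X}`):
the valuations of the coefficients tend to `∞`. -/
def Conv (f : PowerSeries K) : Prop :=
  ∀ M : ℝ, ∃ N : ℕ, ∀ i ≥ N, (M : EReal) ≤ v.w (PowerSeries.coeff i f)

/-- The series `f(c) = Σ fᵢ cⁱ` (with `f` over the valuation ring `R`) converges to `0`:
the valuations of the partial sums tend to `∞`. -/
def EvalZeroR (f : PowerSeries v.subring) (c : v.subring) : Prop :=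
  ∀ M : ℝ, ∃ N : ℕ, ∀ n ≥ N,
    (M : EReal) ≤ v.w ((∑ i ∈ Finset.range n, PowerSeries.coeff i f * c ^ i : v.subring) : K)

end AddRealValuation

/-- `𝓕` is a defining family of rank-1 valuations exhibiting the domain `D`
(with fraction field `F`) as a generalized Krull domain:
(a) for each `v ∈ 𝓕` the valuation ring of `v` is the localization of `D`
at the prime `{a : v a > 0}`; (b) `⋂ D_v = D`; (c) each nonzero `a ∈ D`
satisfies `v a = 0` for all but finitely many `v ∈ 𝓕`. -/
def IsGKFamily (D : Type*) [CommRing D] [IsDomain D] (F : Type*) [Field F]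
    [Algebra D F] [IsFractionRing D F] (𝓕 : Set (AddRealValuation F)) : Prop :=
  (∀ u ∈ 𝓕, ∀ x : F, 0 ≤ u.w x ↔
    ∃ a b : D, b ≠ 0 ∧ ¬ 0 < u.w (algebraMap D F b) ∧ x * algebraMap D F b = algebraMap D F a) ∧
  (∀ x : F, (∀ u ∈ 𝓕, 0 ≤ u.w x) → ∃ a : D, x = algebraMap D F a) ∧
  (∀ a : D, a ≠ 0 → {u ∈ 𝓕 | u.w (algebraMap D F a) ≠ 0}.Finite)

namespace AddRealValuation

variable {K : Type*} [Field K] (v : AddRealValuation K)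

lemma w_ne_bot (x : K) : v.w x ≠ ⊥ := by
  by_cases hx : x = 0
  · rw [hx, v.map_zero']; exact top_ne_bot
  · obtain ⟨r, hr⟩ := v.finite' x hx; rw [hr]; exact EReal.coe_ne_bot r

lemma w_add_eq {x y : K} (h : v.w x < v.w y) : v.w (x + y) = v.w x := by
  have h1 : v.w x ≤ v.w (x + y) := le_trans (le_min le_rfl h.le) (v.add_le' x y)
  refine le_antisymm ?_ h1
  have h2 : min (v.w (x + y)) (v.w (-y)) ≤ v.w (x + y + -y) := v.add_le' _ _
  rw [add_neg_cancel_right] at h2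
  rcases min_le_iff.mp h2 with h3 | h3
  · exact h3
  · rw [v.map_neg'] at h3; exact absurd h (not_lt.mpr h3)

lemma w_sum_le {ι : Type*} {s : Finset ι} {t : ι → K} {c : EReal}
    (h : ∀ j ∈ s, c ≤ v.w (t j)) : c ≤ v.w (∑ j ∈ s, t j) := by
  classical
  induction s using Finset.induction_on with
  | empty => simp [v.map_zero']
  | @insert a s' ha ih =>
    rw [Finset.sum_insert ha]
    refine le_trans (le_min (h a (Finset.mem_insert_self a s'))
      (ih fun j hj => h j (Finset.mem_insert_of_mem hj))) (v.add_le' _ _)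

lemma w_sum_lt {ι : Type*} {s : Finset ι} {t : ι → K} {c : EReal} (hc : c < ⊤)
    (h : ∀ j ∈ s, c < v.w (t j)) : c < v.w (∑ j ∈ s, t j) := by
  classical
  induction s using Finset.induction_on with
  | empty => simpa [v.map_zero'] using hc
  | @insert a s' ha ih =>
    rw [Finset.sum_insert ha]
    refine lt_of_lt_of_le (lt_min (h a (Finset.mem_insert_self a s'))
      (ih fun j hj => h j (Finset.mem_insert_of_mem hj))) (v.add_le' _ _)

lemma w_pow {a : K} {r : ℝ} (h : v.w a = (r : EReal)) (n : ℕ) :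
    v.w (a ^ n) = ((n * r : ℝ) : EReal) := by
  induction n with
  | zero => simp [v.map_one']
  | succ n ih =>
    rw [pow_succ, v.map_mul', ih, h, ← EReal.coe_add]
    exact congrArg _ (by push_cast; ring)

lemma ereal_add_lt {ra rc : ℝ} {b d : EReal} (hb : (ra : EReal) < b) (hd : (rc : EReal) ≤ d) :
    ((ra + rc : ℝ) : EReal) < b + d := by
  have hdb : d ≠ ⊥ := fun hbot => by rw [hbot] at hd; exact (EReal.coe_ne_bot rc) (le_bot_iff.mp hd)
  induction b using EReal.rec with
  | bot => exact absurd hb (by simp)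
  | top => rw [EReal.top_add_of_ne_bot hdb]; exact EReal.coe_lt_top _
  | coe rb =>
    induction d using EReal.rec with
    | bot => exact absurd hdb (by simp)
    | top => rw [EReal.add_top_of_ne_bot (EReal.coe_ne_bot rb)]; exact EReal.coe_lt_top _
    | coe rd =>
      rw [← EReal.coe_add, EReal.coe_lt_coe_iff]
      exact add_lt_add_of_lt_of_le (by exact_mod_cast hb) (by exact_mod_cast hd)

lemma exists_min_index (g : PowerSeries K) (hg : v.Conv g) {i : ℕ} {r : ℝ}
    (hi : v.w (PowerSeries.coeff i g) = (r : EReal)) :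
    ∃ i0 : ℕ, (∀ m, v.w (PowerSeries.coeff i0 g) ≤ v.w (PowerSeries.coeff m g)) ∧
      ∀ j < i0, v.w (PowerSeries.coeff i0 g) < v.w (PowerSeries.coeff j g) := by
  classical
  obtain ⟨N, hN⟩ := hg (r + 1)
  have hiN : i < N := by
    by_contra hle
    have h1 := hN i (not_lt.mp hle)
    rw [hi, EReal.coe_le_coe_iff] at h1
    linarith
  obtain ⟨m0, hm0mem, hm0⟩ := Finset.exists_min_image (Finset.range N)
    (fun n => v.w (PowerSeries.coeff n g)) ⟨i, Finset.mem_range.mpr hiN⟩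
  have hP : ∃ n, ∀ m, v.w (PowerSeries.coeff n g) ≤ v.w (PowerSeries.coeff m g) := by
    refine ⟨m0, fun m => ?_⟩
    by_cases hm : m < N
    · exact hm0 m (Finset.mem_range.mpr hm)
    · calc v.w (PowerSeries.coeff m0 g) ≤ v.w (PowerSeries.coeff i g) :=
            hm0 i (Finset.mem_range.mpr hiN)
        _ ≤ ((r + 1 : ℝ) : EReal) := by
            rw [hi, EReal.coe_le_coe_iff]; linarith
        _ ≤ _ := hN m (not_lt.mp hm)
  refine ⟨Nat.find hP, Nat.find_spec hP, fun j hj => ?_⟩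
  have hnot := Nat.find_min hP hj
  push_neg at hnot
  obtain ⟨m, hm⟩ := hnot
  exact lt_of_le_of_lt (Nat.find_spec hP m) hm

end AddRealValuation

/-- Let `(K, w)` be a non-discrete rank-1 valued field with valuation
ring `R` and maximal ideal `𝔪`. If `f ∈ R[[X]]` satisfies `w f = 0` and all its
coefficients lie in `𝔪`, then for every `ε > 0` there are `i > 0` and `a ∈ 𝔪` with
`w a < ε` and `w fᵢ + i · w a < w f₀`; in particular the substituted series
`g(X) = f(aX)` satisfies `w gᵢ < w g₀`, hence `g` is not invertible in `K{X}`. -/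
theorem statement17 {K : Type*} [Field K] (v : AddRealValuation K)
    (hnd : v.Nondiscrete)
    (f : PowerSeries K) (hwf : v.wS f = 0)
    (hR : ∀ i : ℕ, 0 < v.w (PowerSeries.coeff i f)) :
    ∀ ε : ℝ, 0 < ε → ∃ i : ℕ, 0 < i ∧ ∃ a : K, 0 < v.w a ∧ v.w a < (ε : EReal) ∧
      v.w (PowerSeries.coeff i f) + (i : EReal) * v.w a < v.w (PowerSeries.coeff 0 f) ∧
      (v.w ((PowerSeries.mk fun n => PowerSeries.coeff n f * a ^ n).coeff i)
        < v.w ((PowerSeries.mk fun n => PowerSeries.coeff n f * a ^ n).coeff 0)) ∧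
      ¬ ∃ h : PowerSeries K, v.Conv h ∧
        (PowerSeries.mk fun n => PowerSeries.coeff n f * a ^ n) * h = 1 := by
  classical
  intro ε hε
  -- a real lower bound for w f₀
  obtain ⟨δ, hδ0, hδle⟩ : ∃ δ : ℝ, 0 < δ ∧ (δ : EReal) ≤ v.w (PowerSeries.coeff 0 f) := by
    by_cases h0 : PowerSeries.coeff 0 f = 0
    · exact ⟨1, one_pos, by rw [h0, v.map_zero']; exact le_top⟩
    · obtain ⟨r, hr⟩ := v.finite' _ h0
      refine ⟨r, ?_, le_of_eq hr.symm⟩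
      have := hR 0
      rw [hr] at this
      exact_mod_cast this
  -- find i with small w fᵢ
  have h2 : (⨅ n, v.w (PowerSeries.coeff n f)) < ((δ / 2 : ℝ) : EReal) := by
    have : v.wS f < ((δ / 2 : ℝ) : EReal) := by
      rw [hwf]; exact_mod_cast half_pos hδ0
    exact this
  obtain ⟨i, hi⟩ := iInf_lt_iff.mp h2
  have hine : PowerSeries.coeff i f ≠ 0 := by
    intro h0
    rw [h0, v.map_zero'] at hi
    exact absurd hi (not_lt.mpr le_top)
  obtain ⟨s, hs⟩ := v.finite' _ hine
  have hs0 : 0 < s := by have := hR i; rw [hs] at this; exact_mod_cast this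
  have hsδ : s < δ / 2 := by rw [hs, EReal.coe_lt_coe_iff] at hi; exact hi
  have hipos : 0 < i := by
    rcases Nat.eq_zero_or_pos i with h0 | h0
    · exfalso
      rw [h0] at hi
      have h9 := lt_of_le_of_lt hδle hi
      rw [EReal.coe_lt_coe_iff] at h9
      linarith
    · exact h0
  -- choose a
  have hεi : 0 < min ε (δ / (2 * i)) := by
    have : (0 : ℝ) < δ / (2 * i) := by positivity
    exact lt_min hε this
  obtain ⟨a, ha0, haε⟩ := hnd _ hεi
  have hane : a ≠ 0 := by
    intro h0
    rw [h0, v.map_zero'] at haε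
    exact absurd haε (not_lt.mpr le_top)
  obtain ⟨t, ht⟩ := v.finite' a hane
  have ht0 : 0 < t := by rw [ht] at ha0; exact_mod_cast ha0
  have htmin : t < min ε (δ / (2 * i)) := by rw [ht, EReal.coe_lt_coe_iff] at haε; exact haε
  have htε : t < ε := lt_of_lt_of_le htmin (min_le_left _ _)
  have hti : (i : ℝ) * t < δ / 2 := by
    have h3 : t < δ / (2 * i) := lt_of_lt_of_le htmin (min_le_right _ _)
    have h4 : (0 : ℝ) < (i : ℝ) := by exact_mod_cast hipos
    calc (i : ℝ) * t < (i : ℝ) * (δ / (2 * i)) := by exact mul_lt_mul_of_pos_left h3 h4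
      _ = δ / 2 := by field_simp
  -- the key numerical inequality
  have hkey : s + (i : ℝ) * t < δ := by linarith
  have hcast : (i : EReal) * v.w a = (((i : ℝ) * t : ℝ) : EReal) := by
    rw [ht]
    rw [← EReal.coe_coe_eq_natCast, ← EReal.coe_mul]
  have hwa : v.w (PowerSeries.coeff i f) + (i : EReal) * v.w a
      = ((s + (i : ℝ) * t : ℝ) : EReal) := by
    rw [hs, hcast, ← EReal.coe_add]
  have hmain : v.w (PowerSeries.coeff i f) + (i : EReal) * v.w a
      < v.w (PowerSeries.coeff 0 f) := by
    rw [hwa]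
    exact lt_of_lt_of_le (by exact_mod_cast hkey) hδle
  refine ⟨i, hipos, a, ha0, by rw [ht]; exact_mod_cast htε, hmain, ?_, ?_⟩
  · -- w gᵢ < w g₀
    rw [PowerSeries.coeff_mk, PowerSeries.coeff_mk, pow_zero, mul_one,
      v.map_mul', v.w_pow ht i, hs, ← EReal.coe_add]
    exact lt_of_lt_of_le (by exact_mod_cast hkey) hδle
  · -- no convergent inverse
    rintro ⟨h, hconv, hmul⟩
    set g : PowerSeries K := PowerSeries.mk fun n => PowerSeries.coeff n f * a ^ n with hg
    have hwg : ∀ n : ℕ, v.w (PowerSeries.coeff n g)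
        = v.w (PowerSeries.coeff n f) + (((n : ℝ) * t : ℝ) : EReal) := by
      intro n
      rw [hg, PowerSeries.coeff_mk, v.map_mul', v.w_pow ht n]
    have hgi : v.w (PowerSeries.coeff i g) = ((s + (i : ℝ) * t : ℝ) : EReal) := by
      rw [hwg i, hs, ← EReal.coe_add]
    have hgi0 : v.w (PowerSeries.coeff i g) < v.w (PowerSeries.coeff 0 g) := by
      rw [hgi, hwg 0]
      simp only [Nat.cast_zero, zero_mul, EReal.coe_zero, add_zero]
      exact lt_of_lt_of_le (by exact_mod_cast hkey) hδle
    -- g is convergent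
    have hgconv : v.Conv g := by
      intro M
      refine ⟨⌈M / t⌉₊, fun n hn => ?_⟩
      have h5 : M ≤ (n : ℝ) * t := by
        have h6 : M / t ≤ (n : ℝ) := le_trans (Nat.le_ceil _) (by exact_mod_cast hn)
        rwa [div_le_iff₀ ht0] at h6
      calc (M : EReal) ≤ (((n : ℝ) * t : ℝ) : EReal) := by exact_mod_cast h5
        _ = 0 + (((n : ℝ) * t : ℝ) : EReal) := by rw [zero_add]
        _ ≤ v.w (PowerSeries.coeff n f) + (((n : ℝ) * t : ℝ) : EReal) :=
            add_le_add_left (hR n).le _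
        _ = v.w (PowerSeries.coeff n g) := (hwg n).symm
    -- minimal indices
    obtain ⟨i0, hi0min, hi0str⟩ := v.exists_min_index g hgconv hgi
    have hhne : h ≠ 0 := by
      intro h0
      rw [h0, mul_zero] at hmul
      exact one_ne_zero hmul.symm
    obtain ⟨j, hj⟩ : ∃ j, PowerSeries.coeff j h ≠ 0 := by
      by_contra hcon
      push_neg at hcon
      exact hhne (PowerSeries.ext fun n => by rw [hcon n, map_zero])
    obtain ⟨rh, hrh⟩ := v.finite' _ hj
    obtain ⟨j0, hj0min, hj0str⟩ := v.exists_min_index h hconv hrh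
    -- i0 is positive
    have hi0pos : 0 < i0 := by
      rcases Nat.eq_zero_or_pos i0 with h0 | h0
      · exfalso
        have := lt_of_le_of_lt (hi0min i) hgi0
        rw [h0] at this
        exact lt_irrefl _ this
      · exact h0
    -- coefficients at minimal indices are nonzero, so have real valuations
    have hgi0ne : PowerSeries.coeff i0 g ≠ 0 := by
      intro h0
      have := hi0min i
      rw [h0, v.map_zero', hgi] at this
      exact absurd this (not_le.mpr (EReal.coe_lt_top _))
    obtain ⟨rg0, hrg0⟩ := v.finite' _ hgi0ne
    have hhj0ne : PowerSeries.coeff j0 h ≠ 0 := by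
      intro h0
      have := hj0min j
      rw [h0, v.map_zero', hrh] at this
      exact absurd this (not_le.mpr (EReal.coe_lt_top _))
    obtain ⟨rh0, hrh0⟩ := v.finite' _ hhj0ne
    -- the coefficient of g * h at i0 + j0
    have hmem : (i0, j0) ∈ Finset.HasAntidiagonal.antidiagonal (i0 + j0) := Finset.HasAntidiagonal.mem_antidiagonal.mpr rfl
    have hsplit : PowerSeries.coeff (i0 + j0) (g * h)
        = PowerSeries.coeff i0 g * PowerSeries.coeff j0 h
          + ∑ p ∈ (Finset.HasAntidiagonal.antidiagonal (i0 + j0)).erase (i0, j0),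
              PowerSeries.coeff p.1 g * PowerSeries.coeff p.2 h := by
      rw [PowerSeries.coeff_mul,
        ← Finset.add_sum_erase _ (fun p => PowerSeries.coeff p.1 g * PowerSeries.coeff p.2 h)
          hmem]
    have hwterm : v.w (PowerSeries.coeff i0 g * PowerSeries.coeff j0 h)
        = ((rg0 + rh0 : ℝ) : EReal) := by
      rw [v.map_mul', hrg0, hrh0, ← EReal.coe_add]
    have hrest : v.w (PowerSeries.coeff i0 g * PowerSeries.coeff j0 h)
        < v.w (∑ p ∈ (Finset.HasAntidiagonal.antidiagonal (i0 + j0)).erase (i0, j0),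
            PowerSeries.coeff p.1 g * PowerSeries.coeff p.2 h) := by
      rw [hwterm]
      refine v.w_sum_lt (EReal.coe_lt_top _) fun p hp => ?_
      obtain ⟨hpne, hpmem⟩ := Finset.mem_erase.mp hp
      have hpsum : p.1 + p.2 = i0 + j0 := Finset.HasAntidiagonal.mem_antidiagonal.mp hpmem
      rw [v.map_mul']
      rcases lt_trichotomy p.1 i0 with hlt | heq | hgt
      · have hb : (rg0 : EReal) < v.w (PowerSeries.coeff p.1 g) := by
          rw [← hrg0]; exact hi0str p.1 hlt
        have hd : (rh0 : EReal) ≤ v.w (PowerSeries.coeff p.2 h) := by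
          rw [← hrh0]; exact hj0min p.2
        exact AddRealValuation.ereal_add_lt hb hd
      · exact absurd (Prod.ext heq (by omega)) hpne
      · have hp2 : p.2 < j0 := by omega
        have hb : (rh0 : EReal) < v.w (PowerSeries.coeff p.2 h) := by
          rw [← hrh0]; exact hj0str p.2 hp2
        have hd : (rg0 : EReal) ≤ v.w (PowerSeries.coeff p.1 g) := by
          rw [← hrg0]; exact hi0min p.1
        have := AddRealValuation.ereal_add_lt hb hd
        rw [add_comm (v.w (PowerSeries.coeff p.2 h))] at this
        rw [show rg0 + rh0 = rh0 + rg0 from add_comm _ _]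
        exact this
    have hwcoeff : v.w (PowerSeries.coeff (i0 + j0) (g * h)) = ((rg0 + rh0 : ℝ) : EReal) := by
      rw [hsplit, v.w_add_eq (by rw [hwterm] at hrest ⊢; exact hrest), hwterm]
    -- but g * h = 1 and i0 + j0 > 0, so that coefficient is 0
    have hzero : PowerSeries.coeff (i0 + j0) (g * h) = 0 := by
      rw [hmul, PowerSeries.coeff_one, if_neg (by omega)]
    rw [hzero, v.map_zero'] at hwcoeff
    exact EReal.coe_ne_top _ hwcoeff.symm
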